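/- Let n ≥ 2 and k ≥ 1 be integers. If there exists a non-constant polynomial map S^n → S^{2k+1}, then there exists a non-constant polynomial map S^n → S^{2k}. -/

import Mathlib

open MvPolynomial

noncomputable section

/-- The unit sphere `S^n ⊂ ℝ^{n+1}`, as the set of points with sum of squared coordinates 1. -/
def sphereSet (n : ℕ) : Set (Fin (n + 1) → ℝ) := {x | ∑ i, x i ^ 2 = 1}

/-- Each component of `F` is (the evaluation of) a real polynomial. -/
def IsPolyFun {n m : ℕ} (F : (Fin n → ℝ) → (Fin m → ℝ)) : Prop :=
  ∀ j, ∃ p : MvPolynomial (Fin n) ℝ, ∀ x, F x j = eval x p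

/-- A polynomial map `S^n → S^r`: a polynomial map `ℝ^{n+1} → ℝ^{r+1}` sending the sphere to
the sphere. -/
def IsSpherePolyMap (n r : ℕ) (F : (Fin (n + 1) → ℝ) → (Fin (r + 1) → ℝ)) : Prop :=
  IsPolyFun F ∧ ∀ x ∈ sphereSet n, F x ∈ sphereSet r

/-- `F` is non-constant on the set `s`. -/
def NonconstOn {α β : Type*} (s : Set α) (F : α → β) : Prop :=
  ∃ x ∈ s, ∃ y ∈ s, F x ≠ F y

/-- There exists a polynomial map `S^n → S^r` which is non-constant on `S^n`. -/
def ExistsNonconstPolyMap (n r : ℕ) : Prop :=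
  ∃ F : (Fin (n + 1) → ℝ) → (Fin (r + 1) → ℝ),
    IsSpherePolyMap n r F ∧ NonconstOn (sphereSet n) F

/-- `q n` is the least `r ≥ 1` for which there exists a non-constant polynomial map
`S^n → S^r`. -/
def q (n : ℕ) : ℕ := sInf {r | 1 ≤ r ∧ ExistsNonconstPolyMap n r}

namespace SpherePolyAux

variable {N : ℕ}

/-- Dot product on plain pi types. -/
def dotp {N : ℕ} (x y : Fin N → ℝ) : ℝ := ∑ i, x i * y i

lemma dotp_comm (x y : Fin N → ℝ) : dotp x y = dotp y x := by
  simp [dotp, mul_comm]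

lemma dotp_self_eq_sum_sq (x : Fin N → ℝ) : dotp x x = ∑ i, x i ^ 2 := by
  simp [dotp, pow_two]

lemma dotp_self_pos {x : Fin N → ℝ} (hx : x ≠ 0) : 0 < dotp x x := by
  rw [dotp_self_eq_sum_sq]
  have : ∃ i, x i ≠ 0 := by
    by_contra hc
    push_neg at hc
    exact hx (funext hc)
  obtain ⟨i, hi⟩ := this
  exact Finset.sum_pos' (fun j _ => sq_nonneg _)
    ⟨i, Finset.mem_univ i, by positivity⟩

lemma dotp_sub_left (a p y : Fin N → ℝ) :
    dotp (fun i => a i - p i) y = dotp a y - dotp p y := by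
  simp [dotp, sub_mul, Finset.sum_sub_distrib]

lemma dotp_sub_right (x a p : Fin N → ℝ) :
    dotp x (fun i => a i - p i) = dotp x a - dotp x p := by
  simp [dotp, mul_sub, Finset.sum_sub_distrib]

lemma dotp_expand (x y w : Fin N → ℝ) (c e : ℝ) :
    dotp (fun j => x j - c * w j) (fun j => y j - e * w j)
      = dotp x y - e * dotp x w - c * dotp y w + c * e * dotp w w := by
  have h : ∀ j, (x j - c * w j) * (y j - e * w j)
      = x j * y j - e * (x j * w j) - c * (y j * w j) + c * e * (w j * w j) := by
    intro j; ring
  simp only [dotp]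
  rw [Finset.sum_congr rfl fun j _ => h j, Finset.sum_add_distrib,
    Finset.sum_sub_distrib, Finset.sum_sub_distrib, ← Finset.mul_sum, ← Finset.mul_sum,
    ← Finset.mul_sum]

/-- Householder-type reflection. -/
def hh (w z : Fin N → ℝ) : Fin N → ℝ :=
  fun j => z j - 2 * dotp z w / dotp w w * w j

lemma dotp_hh (w x y : Fin N → ℝ) : dotp (hh w x) (hh w y) = dotp x y := by
  unfold hh
  rw [dotp_expand]
  by_cases hw : dotp w w = 0
  · simp [hw]
  · field_simp
    ring

lemma hh_fix (w z : Fin N → ℝ) (hz : dotp z w = 0) : hh w z = z := by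
  funext j
  simp [hh, hz]

lemma hh_swap (a p : Fin N → ℝ) (ha : dotp a a = 1) (hp : dotp p p = 1) :
    hh (fun i => a i - p i) a = p := by
  by_cases hap : a = p
  · subst hap
    funext j
    simp [hh]
  · have hw : (fun i => a i - p i) ≠ 0 := by
      intro hc
      apply hap
      funext i
      have := congrFun hc i
      simp at this
      linarith
    have hww : 0 < dotp (fun i => a i - p i) (fun i => a i - p i) := dotp_self_pos hw
    have hexp : dotp (fun i => a i - p i) (fun i => a i - p i)
        = 2 - 2 * dotp a p := by
      rw [dotp_sub_left, dotp_sub_right, dotp_sub_right, ha, hp, dotp_comm p a]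
      ring
    have haw : dotp a (fun i => a i - p i) = 1 - dotp a p := by
      rw [dotp_sub_right, ha]
    funext j
    have hcoef : 2 * dotp a (fun i => a i - p i)
        / dotp (fun i => a i - p i) (fun i => a i - p i) = 1 := by
      have hne : (2:ℝ) - 2 * dotp a p ≠ 0 := by
        rw [hexp] at hww; linarith
      rw [haw, hexp, div_eq_one_iff_eq hne]
      ring
    simp only [hh, hcoef]
    ring

lemma hh_norm (w z : Fin N → ℝ) : ∑ i, hh w z i ^ 2 = ∑ i, z i ^ 2 := by
  rw [← dotp_self_eq_sum_sq, ← dotp_self_eq_sum_sq, dotp_hh]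

lemma hh_poly (w : Fin N → ℝ) : IsPolyFun (hh w) := by
  intro j
  refine ⟨X j - ∑ i : Fin N, C (2 * w i / dotp w w * w j) * X i, fun z => ?_⟩
  simp only [map_sub, map_sum, map_mul, eval_C, eval_X, hh]
  congr 1
  have : ∀ i : Fin N, 2 * w i / dotp w w * w j * z i
      = z i * w i * (2 / dotp w w * w j) := by intro i; ring
  rw [Finset.sum_congr rfl fun i _ => this i, ← Finset.sum_mul, dotp]
  ring

lemma IsPolyFun.comp {n m r : ℕ} {F : (Fin n → ℝ) → Fin m → ℝ}
    {G : (Fin m → ℝ) → Fin r → ℝ} (hF : IsPolyFun F) (hG : IsPolyFun G) :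
    IsPolyFun (fun x => G (F x)) := by
  intro j
  obtain ⟨pg, hg⟩ := hG j
  choose pf hf using hF
  refine ⟨bind₁ pf pg, fun x => ?_⟩
  show G (F x) j = eval x (bind₁ pf pg)
  rw [hg]
  have hFx : F x = fun i => eval x (pf i) := funext fun i => hf i x
  rw [hFx]
  rw [show (eval x) ((bind₁ pf) pg) = (eval₂Hom (RingHom.id ℝ) x) ((bind₁ pf) pg) from rfl,
    eval₂Hom_bind₁]
  rfl

end SpherePolyAux

namespace SpherePolyAux

/-! ### The quadratic map `h(z₀, w) = (|z₀|² - |w|², 2 z₀ conj w)` from `S^{2k+1}` to `S^{2k}` -/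

def di0 (k : ℕ) : Fin (2*k+2) := ⟨0, by omega⟩
def di1 (k : ℕ) : Fin (2*k+2) := ⟨1, by omega⟩
def dR (k : ℕ) (j : Fin k) : Fin (2*k+2) := ⟨2*j.1+2, by have := j.2; omega⟩
def dI (k : ℕ) (j : Fin k) : Fin (2*k+2) := ⟨2*j.1+3, by have := j.2; omega⟩

def ci0 (k : ℕ) : Fin (2*k+1) := ⟨0, by omega⟩
def cR (k : ℕ) (j : Fin k) : Fin (2*k+1) := ⟨2*j.1+1, by have := j.2; omega⟩
def cI (k : ℕ) (j : Fin k) : Fin (2*k+1) := ⟨2*j.1+2, by have := j.2; omega⟩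

def Q0 (k : ℕ) : MvPolynomial (Fin (2*k+2)) ℝ :=
  X (di0 k)^2 + X (di1 k)^2 - ∑ j : Fin k, (X (dR k j)^2 + X (dI k j)^2)

def QR (k : ℕ) (j : Fin k) : MvPolynomial (Fin (2*k+2)) ℝ :=
  C 2 * (X (di0 k) * X (dR k j) + X (di1 k) * X (dI k j))

def QI (k : ℕ) (j : Fin k) : MvPolynomial (Fin (2*k+2)) ℝ :=
  C 2 * (X (di1 k) * X (dR k j) - X (di0 k) * X (dI k j))

def P (k : ℕ) (c : Fin (2*k+1)) : MvPolynomial (Fin (2*k+2)) ℝ :=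
  if hc : c.1 = 0 then Q0 k
  else if (c.1 - 1) % 2 = 0 then QR k ⟨(c.1-1)/2, by have := c.2; omega⟩
  else QI k ⟨(c.1-1)/2, by have := c.2; omega⟩

def hmap (k : ℕ) (z : Fin (2*k+2) → ℝ) : Fin (2*k+1) → ℝ := fun c => eval z (P k c)

lemma hmap_poly (k : ℕ) : IsPolyFun (hmap k) := fun c => ⟨P k c, fun _ => rfl⟩

lemma P_ci0 (k : ℕ) : P k (ci0 k) = Q0 k := by
  simp [P, ci0]

lemma P_cR (k : ℕ) (j : Fin k) : P k (cR k j) = QR k j := by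
  have h0 : ¬((cR k j).1 = 0) := by simp [cR]
  have h1 : ((cR k j).1 - 1) % 2 = 0 := by simp [cR]
  have h2 : ((cR k j).1 - 1) / 2 = j.1 := by simp [cR]
  rw [P, dif_neg h0, if_pos h1]
  congr 1
  exact Fin.ext h2

lemma P_cI (k : ℕ) (j : Fin k) : P k (cI k j) = QI k j := by
  have h0 : ¬((cI k j).1 = 0) := by simp [cI]
  have h1 : ¬(((cI k j).1 - 1) % 2 = 0) := by simp [cI]
  have h2 : ((cI k j).1 - 1) / 2 = j.1 := by simp [cI]; omega
  rw [P, dif_neg h0, if_neg h1]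
  congr 1
  exact Fin.ext h2

lemma eval_Q0 (k : ℕ) (z : Fin (2*k+2) → ℝ) :
    eval z (Q0 k) = z (di0 k)^2 + z (di1 k)^2 - ∑ j : Fin k, (z (dR k j)^2 + z (dI k j)^2) := by
  simp [Q0]

lemma eval_QR (k : ℕ) (j : Fin k) (z : Fin (2*k+2) → ℝ) :
    eval z (QR k j) = 2 * (z (di0 k) * z (dR k j) + z (di1 k) * z (dI k j)) := by
  simp [QR]

lemma eval_QI (k : ℕ) (j : Fin k) (z : Fin (2*k+2) → ℝ) :
    eval z (QI k j) = 2 * (z (di1 k) * z (dR k j) - z (di0 k) * z (dI k j)) := by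
  simp [QI]

lemma fin_congr {M : ℕ} (f : Fin M → ℝ) {a b : ℕ} (ha : a < M) (hb : b < M) (h : a = b) :
    f ⟨a, ha⟩ = f ⟨b, hb⟩ := by subst h; rfl

lemma sum_cod (k : ℕ) (f : Fin (2*k+1) → ℝ) :
    ∑ c, f c = f (ci0 k) + ∑ j : Fin k, (f (cR k j) + f (cI k j)) := by
  set e : Unit ⊕ (Fin k × Fin 2) → Fin (2*k+1) :=
    Sum.elim (fun _ => ci0 k)
      (fun p => ⟨2*p.1.1+1+p.2.1, by have := p.1.2; have := p.2.2; omega⟩) with he_def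
  have hval : ∀ a, (e a).1 = Sum.elim (fun _ => 0) (fun p : Fin k × Fin 2 => 2*p.1.1+1+p.2.1) a := by
    rintro (u | p) <;> simp [he_def, ci0]
  have he : Function.Bijective e := by
    rw [Fintype.bijective_iff_injective_and_card]
    constructor
    · rintro a b hee
      have hv := congrArg Fin.val hee
      rw [hval a, hval b] at hv
      rcases a with ⟨⟩ | ⟨j, l⟩ <;> rcases b with ⟨⟩ | ⟨j', l'⟩ <;>
        simp only [Sum.elim_inl, Sum.elim_inr] at hv
      · rfl
      · exact absurd hv (by have := l'.2; omega)
      · exact absurd hv (by have := l.2; omega)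
      · have hj : j = j' := Fin.ext (by have := l.2; have := l'.2; omega)
        have hl : l = l' := Fin.ext (by have := l.2; have := l'.2; omega)
        rw [hj, hl]
    · simp only [Fintype.card_sum, Fintype.card_prod, Fintype.card_fin, Fintype.card_unit]
      omega
  rw [← Fintype.sum_bijective e he (fun a => f (e a)) f (fun _ => rfl)]
  rw [Fintype.sum_sum_type, Fintype.sum_prod_type]
  congr 1
  · simp [he_def]
  · refine Finset.sum_congr rfl fun j _ => ?_
    rw [Fin.sum_univ_two]
    simp only [he_def, Sum.elim_inr]
    congr 1 <;> exact fin_congr _ _ _ (by simp [cR, cI]; try omega)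

lemma sum_dom (k : ℕ) (g : Fin (2*k+2) → ℝ) :
    ∑ i, g i = (g (di0 k) + g (di1 k)) + ∑ j : Fin k, (g (dR k j) + g (dI k j)) := by
  set e : Fin 2 ⊕ (Fin k × Fin 2) → Fin (2*k+2) :=
    Sum.elim (fun l => ⟨l.1, by have := l.2; omega⟩)
      (fun p => ⟨2*p.1.1+2+p.2.1, by have := p.1.2; have := p.2.2; omega⟩) with he_def
  have hval : ∀ a, (e a).1 = Sum.elim (fun l : Fin 2 => l.1) (fun p : Fin k × Fin 2 => 2*p.1.1+2+p.2.1) a := by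
    rintro (u | p) <;> simp [he_def]
  have he : Function.Bijective e := by
    rw [Fintype.bijective_iff_injective_and_card]
    constructor
    · rintro a b hee
      have hv := congrArg Fin.val hee
      rw [hval a, hval b] at hv
      rcases a with l | ⟨j, l⟩ <;> rcases b with l' | ⟨j', l'⟩ <;>
        simp only [Sum.elim_inl, Sum.elim_inr] at hv
      · exact congrArg Sum.inl (Fin.ext hv)
      · exact absurd hv (by have := l.2; have := l'.2; omega)
      · exact absurd hv (by have := l.2; have := l'.2; omega)
      · have hj : j = j' := Fin.ext (by have := l.2; have := l'.2; omega)
        have hl : l = l' := Fin.ext (by have := l.2; have := l'.2; omega)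
        rw [hj, hl]
    · simp only [Fintype.card_sum, Fintype.card_prod, Fintype.card_fin]
      omega
  rw [← Fintype.sum_bijective e he (fun a => g (e a)) g (fun _ => rfl)]
  rw [Fintype.sum_sum_type, Fintype.sum_prod_type]
  congr 1
  · rw [Fin.sum_univ_two]
    simp only [he_def, Sum.elim_inl]
    congr 1 <;> exact fin_congr _ _ _ (by simp [di0, di1]; try omega)
  · refine Finset.sum_congr rfl fun j _ => ?_
    rw [Fin.sum_univ_two]
    simp only [he_def, Sum.elim_inr]
    congr 1 <;> exact fin_congr _ _ _ (by simp [dR, dI]; try omega)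

lemma hmap_norm (k : ℕ) (z : Fin (2*k+2) → ℝ) :
    ∑ c, hmap k z c ^ 2 = (∑ i, z i ^ 2) ^ 2 := by
  rw [sum_cod k (fun c => hmap k z c ^ 2), sum_dom k (fun i => z i ^ 2)]
  simp only [hmap, P_ci0, P_cR, P_cI, eval_Q0, eval_QR, eval_QI]
  have hstep : ∀ j : Fin k,
      (2 * (z (di0 k) * z (dR k j) + z (di1 k) * z (dI k j))) ^ 2
        + (2 * (z (di1 k) * z (dR k j) - z (di0 k) * z (dI k j))) ^ 2
      = (4 * (z (di0 k) ^ 2 + z (di1 k) ^ 2)) * (z (dR k j) ^ 2 + z (dI k j) ^ 2) := by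
    intro j; ring
  rw [Finset.sum_congr rfl fun j _ => hstep j, ← Finset.mul_sum]
  ring

end SpherePolyAux

namespace SpherePolyAux

lemma sum_ite_single {M : ℕ} (m : ℕ) (hm : m < M) (t : ℝ) :
    ∑ i : Fin M, (if i.1 = m then t else 0) = t := by
  rw [Finset.sum_eq_single (⟨m, hm⟩ : Fin M)]
  · simp
  · intro b _ hb
    exact if_neg fun hbv => hb (Fin.ext hbv)
  · intro hmem
    exact absurd (Finset.mem_univ _) hmem

def pvec (k : ℕ) : Fin (2*k+2) → ℝ := fun i => if i.1 = 0 then 1 else 0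
def dvec (k : ℕ) : Fin (2*k+2) → ℝ := fun i => if i.1 = 2 then 1 else 0
def qvec (k : ℕ) (c s : ℝ) : Fin (2*k+2) → ℝ := fun i => c * pvec k i + s * dvec k i

lemma dotp_pvec_pvec (k : ℕ) : dotp (pvec k) (pvec k) = 1 := by
  have h : ∀ i : Fin (2*k+2), pvec k i * pvec k i = if i.1 = 0 then 1 else 0 := by
    intro i; unfold pvec; split_ifs <;> ring
  rw [dotp, Finset.sum_congr rfl fun i _ => h i, sum_ite_single 0 (by omega)]

lemma dotp_qvec_qvec (k : ℕ) (hk : 1 ≤ k) (c s : ℝ) :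
    dotp (qvec k c s) (qvec k c s) = c^2 + s^2 := by
  have h : ∀ i : Fin (2*k+2), qvec k c s i * qvec k c s i
      = (if i.1 = 0 then c^2 else 0) + (if i.1 = 2 then s^2 else 0) := by
    intro i; unfold qvec pvec dvec; split_ifs <;> first | (exfalso; (try simp only [Fin.val_mk] at *); omega) | ring
  rw [dotp, Finset.sum_congr rfl fun i _ => h i, Finset.sum_add_distrib,
    sum_ite_single 0 (by omega), sum_ite_single 2 (by omega)]

lemma dotp_qvec_pvec (k : ℕ) (c s : ℝ) : dotp (qvec k c s) (pvec k) = c := by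
  have h : ∀ i : Fin (2*k+2), qvec k c s i * pvec k i = if i.1 = 0 then c else 0 := by
    intro i; unfold qvec pvec dvec; split_ifs <;> first | (exfalso; (try simp only [Fin.val_mk] at *); omega) | ring
  rw [dotp, Finset.sum_congr rfl fun i _ => h i, sum_ite_single 0 (by omega)]

lemma hmap_pvec (k : ℕ) : hmap k (pvec k) (ci0 k) = 1 := by
  rw [hmap, P_ci0, eval_Q0]
  have h0 : pvec k (di0 k) = 1 := if_pos rfl
  have h1 : pvec k (di1 k) = 0 := if_neg (by simp [di1])
  have hsum : ∑ j : Fin k, (pvec k (dR k j)^2 + pvec k (dI k j)^2) = 0 :=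
    Finset.sum_eq_zero fun j _ => by
      have hR : pvec k (dR k j) = 0 := if_neg (by simp [dR])
      have hI : pvec k (dI k j) = 0 := if_neg (by simp [dI])
      rw [hR, hI]; ring
  rw [h0, h1, hsum]; norm_num

lemma hmap_qvec (k : ℕ) (hk : 1 ≤ k) (c s : ℝ) :
    hmap k (qvec k c s) (ci0 k) = c^2 - s^2 := by
  rw [hmap, P_ci0, eval_Q0]
  have h0 : qvec k c s (di0 k) = c := by
    unfold qvec pvec dvec; norm_num [di0]
  have h1 : qvec k c s (di1 k) = 0 := by
    unfold qvec pvec dvec; norm_num [di1]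
  have hsum : ∑ j : Fin k, (qvec k c s (dR k j)^2 + qvec k c s (dI k j)^2) = s^2 := by
    have h : ∀ j : Fin k, qvec k c s (dR k j)^2 + qvec k c s (dI k j)^2
        = if j.1 = 0 then s^2 else 0 := by
      intro j
      have hR : qvec k c s (dR k j) = if j.1 = 0 then s else 0 := by
        unfold qvec pvec dvec dR
        split_ifs <;> first | (exfalso; (try simp only [Fin.val_mk] at *); omega) | contradiction | ring
      have hI : qvec k c s (dI k j) = 0 := by
        unfold qvec pvec dvec dI
        split_ifs <;> first | (exfalso; (try simp only [Fin.val_mk] at *); omega) | contradiction | ring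
      rw [hR, hI]
      split_ifs <;> ring
    rw [Finset.sum_congr rfl fun j _ => h j, sum_ite_single 0 hk]
  rw [h0, h1, hsum]; ring

lemma continuous_evalp {m : ℕ} (p : MvPolynomial (Fin m) ℝ) :
    Continuous fun z : Fin m → ℝ => eval z p := by
  simp only [eval_eq]
  exact continuous_finset_sum _ fun d _ =>
    continuous_const.mul (continuous_finset_prod _ fun i _ => (continuous_apply i).pow _)

lemma continuous_of_polyFun {m r : ℕ} {F : (Fin m → ℝ) → Fin r → ℝ} (hF : IsPolyFun F) :
    Continuous F := by
  apply continuous_pi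
  intro j
  obtain ⟨p, hp⟩ := hF j
  have : (fun z => F z j) = fun z => eval z p := funext hp
  rw [this]
  exact continuous_evalp p

lemma isPreconnected_sphereSet (n : ℕ) (hn : 1 ≤ n) : IsPreconnected (sphereSet n) := by
  classical
  set E := EuclideanSpace ℝ (Fin (n+1)) with hE
  have hrank : 1 < Module.rank ℝ E := by
    rw [← Module.finrank_eq_rank, finrank_euclideanSpace_fin]
    exact_mod_cast by omega
  have hconn : IsConnected (Metric.sphere (0 : E) 1) :=
    isConnected_sphere hrank 0 zero_le_one
  have himg : sphereSet n = ⇑(WithLp.equiv 2 (Fin (n+1) → ℝ)) '' Metric.sphere (0 : E) 1 := by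
    rw [Equiv.image_eq_preimage_symm, EuclideanSpace.sphere_zero_eq _ zero_le_one]
    ext x
    simp only [Set.mem_preimage, Set.mem_setOf_eq, one_pow]
    exact Iff.rfl
  rw [himg]
  exact (hconn.image _ (show Continuous ⇑(WithLp.equiv 2 (Fin (n+1) → ℝ)) by apply PiLp.continuous_ofLp).continuousOn).isPreconnected

end SpherePolyAux

open SpherePolyAux

/-- If `n ≥ 2`, `k ≥ 1`, and there exists a non-constant polynomial map `S^n → S^{2k+1}`,
then there exists a non-constant polynomial map `S^n → S^{2k}`. -/
theorem nonconst_poly_map_odd_to_even (n k : ℕ) (hn : 2 ≤ n) (hk : 1 ≤ k)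
    (h : ExistsNonconstPolyMap n (2 * k + 1)) : ExistsNonconstPolyMap n (2 * k) := by
  classical
  obtain ⟨F, ⟨hFpoly, hFsph⟩, x0, hx0, y0, hy0, hFxy⟩ := h
  have hFcont : Continuous F := continuous_of_polyFun hFpoly
  have hdotFF : ∀ x ∈ sphereSet n, dotp (F x) (F x) = 1 := by
    intro x hx
    rw [dotp_self_eq_sum_sq]
    exact hFsph x hx
  -- Step 1: find witnesses whose values are neither equal nor antipodal.
  have key : ∃ x' ∈ sphereSet n, ∃ y' ∈ sphereSet n,
      F x' ≠ F y' ∧ F x' ≠ fun i => -(F y' i) := by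
    by_cases hanti : F x0 = fun i => -(F y0 i)
    · have hpre := isPreconnected_sphereSet n (by omega)
      have hgcont : ContinuousOn (fun z => dotp (F z) (F x0)) (sphereSet n) := by
        apply Continuous.continuousOn
        exact continuous_finset_sum _ fun i _ =>
          ((continuous_apply i).comp hFcont).mul continuous_const
      have hgx0 : dotp (F x0) (F x0) = 1 := hdotFF x0 hx0
      have hgy0 : dotp (F y0) (F x0) = -1 := by
        rw [hanti]
        have hzz : dotp (F y0) (fun i => -(F y0 i)) = -dotp (F y0) (F y0) := by
          simp [dotp, mul_neg]
        rw [hzz, hdotFF y0 hy0]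
      obtain ⟨z, hz, hgz⟩ := hpre.intermediate_value₂ hy0 hx0 hgcont
        (continuousOn_const (c := (0:ℝ))) (by rw [hgy0]; norm_num) (by rw [hgx0]; norm_num)
      refine ⟨x0, hx0, z, hz, ?_, ?_⟩
      · intro he
        rw [← he, hgx0] at hgz
        exact one_ne_zero hgz
      · intro he
        rw [he] at hgz
        have hzz : dotp (F z) (fun i => -(F z i)) = -dotp (F z) (F z) := by
          simp [dotp, mul_neg]
        rw [hzz, hdotFF z hz] at hgz
        norm_num at hgz
    · exact ⟨x0, hx0, y0, hy0, hFxy, hanti⟩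
  obtain ⟨x', hx', y', hy', hne, hnanti⟩ := key
  set a : Fin (2*k+2) → ℝ := F x' with ha_def
  set b : Fin (2*k+2) → ℝ := F y' with hb_def
  have ha : dotp a a = 1 := by rw [ha_def]; exact hdotFF x' hx'
  have hb : dotp b b = 1 := by rw [hb_def]; exact hdotFF y' hy'
  obtain ⟨c, hc_def⟩ : ∃ c : ℝ, c = dotp a b := ⟨_, rfl⟩
  have hsub_ne : (fun j => a j - 1 * b j) ≠ (0 : Fin (2*k+2) → ℝ) := by
    intro hcon
    apply hne
    funext i
    have hci := congrFun hcon i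
    simp only [Pi.zero_apply, one_mul] at hci
    linarith
  have hadd_ne : (fun j => a j - (-1) * b j) ≠ (0 : Fin (2*k+2) → ℝ) := by
    intro hcon
    apply hnanti
    funext i
    have hci := congrFun hcon i
    simp only [Pi.zero_apply, neg_one_mul] at hci
    linarith
  have hc1 : c < 1 := by
    have hpos := dotp_self_pos hsub_ne
    rw [dotp_expand, ha, hb, ← hc_def] at hpos
    linarith
  have hc2 : -1 < c := by
    have hpos := dotp_self_pos hadd_ne
    rw [dotp_expand, ha, hb, ← hc_def] at hpos
    linarith
  set s : ℝ := Real.sqrt (1 - c^2) with hs_def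
  have hs2 : s^2 = 1 - c^2 := Real.sq_sqrt (by nlinarith)
  -- Step 2: reflections carrying a ↦ pvec, b ↦ qvec
  set w1 : Fin (2*k+2) → ℝ := fun i => a i - pvec k i with hw1
  have hH1a : hh w1 a = pvec k := hh_swap a (pvec k) ha (dotp_pvec_pvec k)
  set b1 : Fin (2*k+2) → ℝ := hh w1 b with hb1_def
  have hb1b1 : dotp b1 b1 = 1 := by rw [hb1_def, dotp_hh, hb]
  have hb1p : dotp b1 (pvec k) = c := by
    rw [hb1_def, ← hH1a, dotp_hh, dotp_comm, ← hc_def]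
  have hqq : dotp (qvec k c s) (qvec k c s) = 1 := by
    rw [dotp_qvec_qvec k hk, hs2]; ring
  set w2 : Fin (2*k+2) → ℝ := fun i => b1 i - qvec k c s i with hw2
  have hH2b1 : hh w2 b1 = qvec k c s := hh_swap b1 (qvec k c s) hb1b1 hqq
  have hpw2 : dotp (pvec k) w2 = 0 := by
    rw [hw2, dotp_sub_right, dotp_comm (pvec k) b1, hb1p,
      dotp_comm (pvec k) (qvec k c s), dotp_qvec_pvec]
    ring
  have hH2p : hh w2 (pvec k) = pvec k := hh_fix w2 (pvec k) hpw2
  -- Step 3: the composite map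
  refine ⟨fun z => hmap k (hh w2 (hh w1 (F z))), ⟨?_, ?_⟩, x', hx', y', hy', ?_⟩
  · exact IsPolyFun.comp
      (IsPolyFun.comp (IsPolyFun.comp hFpoly (hh_poly w1)) (hh_poly w2)) (hmap_poly k)
  · intro z hz
    show ∑ i, hmap k (hh w2 (hh w1 (F z))) i ^ 2 = 1
    rw [hmap_norm, hh_norm, hh_norm]
    have : ∑ i, F z i ^ 2 = 1 := hFsph z hz
    rw [this]
    norm_num
  · have hGx' : hmap k (hh w2 (hh w1 (F x'))) = hmap k (pvec k) := by
      rw [← ha_def, hH1a, hH2p]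
    have hGy' : hmap k (hh w2 (hh w1 (F y'))) = hmap k (qvec k c s) := by
      rw [← hb_def, ← hb1_def, hH2b1]
    show hmap k (hh w2 (hh w1 (F x'))) ≠ hmap k (hh w2 (hh w1 (F y')))
    rw [hGx', hGy']
    intro heq
    have h0 := congrFun heq (ci0 k)
    rw [hmap_pvec, hmap_qvec k hk] at h0
    nlinarith [hs2, hc1, hc2, h0]
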